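/- Let R be a nonsingular M-matrix with e'R ≥ 0' entrywise, and let p be a nonnegative probability vector (p ≥ 0, e'p = 1). Then the matrix product R²(I − pe') has no real negative eigenvalue. -/

import Mathlib

open Matrix

private lemma mapVec_ofReal {K : ℕ} (A : Matrix (Fin K) (Fin K) ℝ) (v : Fin K → ℝ) :
    (A.map Complex.ofReal) *ᵥ (fun j => (v j : ℂ)) = fun i => ((A *ᵥ v) i : ℂ) := by
  funext i
  simp only [Matrix.mulVec, dotProduct, Matrix.map_apply]
  push_cast
  rfl

private lemma norm_sub_mul_I_ge {s c : ℝ} (hs : 0 < s) : s ≤ ‖(s:ℂ) - (c:ℂ)*Complex.I‖ := by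
  have h1 : ‖(s:ℂ) - (c:ℂ)*Complex.I‖^2 = s^2 + c^2 := by
    rw [Complex.sq_norm, Complex.normSq_apply]
    simp
    ring
  nlinarith [norm_nonneg ((s:ℂ) - (c:ℂ)*Complex.I), hs.le, sq_nonneg c]

/-- Let `R = sI − N` be a nonsingular M-matrix with `e'R ≥ 0'` entrywise, and let `p` be a
nonnegative probability vector. Then `R²(I − pe')` has no real negative eigenvalue. -/
theorem no_real_negative_eigenvalue {K : ℕ} (R N : Matrix (Fin K) (Fin K) ℝ) (s : ℝ)
    (hs : 0 < s) (hN : ∀ i j, 0 ≤ N i j)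
    (hR : R = s • (1 : Matrix (Fin K) (Fin K) ℝ) - N)
    (hρ : ∀ μ ∈ spectrum ℂ (N.map (Complex.ofReal)), ‖μ‖ < s)
    (heR : ∀ j, 0 ≤ ∑ i, R i j)
    (p : Fin K → ℝ) (hp : ∀ i, 0 ≤ p i) (hp1 : ∑ i, p i = 1) :
    ∀ t : ℝ, t < 0 →
      t ∉ spectrum ℝ (R ^ 2 * ((1 - Matrix.vecMulVec p (fun _ => (1:ℝ))) : Matrix (Fin K) (Fin K) ℝ)) := by
  intro t ht hmem
  classical
  set M : Matrix (Fin K) (Fin K) ℝ :=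
    R ^ 2 * (1 - Matrix.vecMulVec p (fun _ => (1:ℝ))) with hMdef
  rw [spectrum.mem_iff] at hmem
  have hdet : ((algebraMap ℝ (Matrix (Fin K) (Fin K) ℝ)) t - M).det = 0 := by
    by_contra h
    exact hmem ((Matrix.isUnit_iff_isUnit_det _).mpr (isUnit_iff_ne_zero.mpr h))
  obtain ⟨v, hv0, hv⟩ := Matrix.exists_mulVec_eq_zero_iff.mpr hdet
  have hMv : M *ᵥ v = t • v := by
    have h1 : (algebraMap ℝ (Matrix (Fin K) (Fin K) ℝ)) t *ᵥ v - M *ᵥ v = 0 := by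
      rw [← Matrix.sub_mulVec]; exact hv
    have h2 := sub_eq_zero.mp h1
    rw [Algebra.algebraMap_eq_smul_one] at h2
    rw [← h2, Matrix.smul_mulVec, Matrix.one_mulVec]
  -- basic constants
  have hc0 : (0:ℝ) < -t := by linarith
  set c := Real.sqrt (-t) with hcdef
  have hc : 0 < c := Real.sqrt_pos.mpr hc0
  have hc2 : c ^ 2 = -t := Real.sq_sqrt hc0.le
  set z : ℂ := (s:ℂ) + (c:ℂ) * Complex.I with hzdef
  have hzre : z.re = s := by simp [hzdef]
  have hzim : z.im = c := by simp [hzdef]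
  have hznorm : ‖z‖ ^ 2 = s^2 + c^2 := by
    rw [Complex.sq_norm, Complex.normSq_apply, hzre, hzim]; ring
  set r := ‖z‖ with hrdef
  have hsr : s < r := by
    have h1 : s^2 < r^2 := by rw [hrdef, hznorm]; nlinarith
    exact lt_of_pow_lt_pow_left₀ 2 (norm_nonneg z) h1
  have hr0 : 0 < r := lt_trans hs hsr
  have hz0 : z ≠ 0 := fun h => hs.ne' (by rw [← hzre, h, Complex.zero_re])
  set u := s / r with hudef
  have hu0 : 0 ≤ u := div_nonneg hs.le hr0.le
  have hu1 : u < 1 := (div_lt_one hr0).mpr hsr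
  set NC := N.map Complex.ofReal with hNCdef
  set RC := R.map Complex.ofReal with hRCdef
  have hRC : RC = (s:ℂ) • (1 : Matrix (Fin K) (Fin K) ℂ) - NC := by
    funext i j
    simp only [hRCdef, hNCdef, Matrix.map_apply, hR, Matrix.sub_apply, Matrix.smul_apply,
      Matrix.one_apply, smul_eq_mul]
    push_cast [apply_ite Complex.ofReal]
    ring_nf
  -- injectivity of ζ•1 - NC for ‖ζ‖ ≥ s
  have inj : ∀ ζ : ℂ, s ≤ ‖ζ‖ → ∀ y : Fin K → ℂ,
      (ζ • (1:Matrix (Fin K) (Fin K) ℂ) - NC) *ᵥ y = 0 → y = 0 := by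
    intro ζ hζ y hy
    have hnot : ζ ∉ spectrum ℂ NC := fun hmem' => absurd (hρ ζ hmem') (not_lt.mpr hζ)
    have hunit := spectrum.notMem_iff.mp hnot
    rw [Algebra.algebraMap_eq_smul_one] at hunit
    by_contra h0
    have hd := Matrix.exists_mulVec_eq_zero_iff.mp ⟨y, h0, hy⟩
    rw [Matrix.isUnit_iff_isUnit_det, hd] at hunit
    exact hunit.ne_zero rfl
  -- column sums
  set a : Fin K → ℝ := fun j => ∑ i, R i j with hadef
  have ha : ∀ j, 0 ≤ a j := heR
  have hcol : ∀ j, ∑ i, N i j = s - a j := by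
    intro j
    have h1 : a j = s - ∑ i, N i j := by
      simp only [hadef, hR, Matrix.sub_apply, Matrix.smul_apply, Matrix.one_apply, smul_eq_mul,
        Finset.sum_sub_distrib, mul_ite, mul_one, mul_zero]
      rw [Finset.sum_ite_eq' Finset.univ j (fun _ => s)]
      simp
    linarith
  -- the nonnegative iterates
  set q : ℕ → Fin K → ℝ := fun k => (N ^ k) *ᵥ p with hqdef
  have hq0 : q 0 = p := by simp [hqdef, Matrix.one_mulVec]
  have hqsucc : ∀ k, q (k+1) = N *ᵥ (q k) := by
    intro k
    simp only [hqdef, pow_succ']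
    rw [← Matrix.mulVec_mulVec]
  have hqnn : ∀ k i, 0 ≤ q k i := by
    intro k
    induction k with
    | zero => intro i; rw [hq0]; exact hp i
    | succ k ih =>
      intro i
      rw [hqsucc]
      simp only [Matrix.mulVec, dotProduct]
      exact Finset.sum_nonneg fun j _ => mul_nonneg (hN i j) (ih j)
  set b : ℕ → ℝ := fun k => ∑ i, q k i with hbdef
  set g : ℕ → ℝ := fun k => ∑ j, a j * q k j with hgdef
  have hb0 : b 0 = 1 := by simp [hbdef, hq0, hp1]
  have hbnn : ∀ k, 0 ≤ b k := fun k => Finset.sum_nonneg fun i _ => hqnn k i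
  have hgnn : ∀ k, 0 ≤ g k := fun k => Finset.sum_nonneg fun j _ => mul_nonneg (ha j) (hqnn k j)
  have hqleb : ∀ k i, q k i ≤ b k := fun k i =>
    Finset.single_le_sum (fun j _ => hqnn k j) (Finset.mem_univ i)
  have hbsucc : ∀ k, b (k+1) = s * b k - g k := by
    intro k
    have h1 : b (k+1) = ∑ i, ∑ j, N i j * q k j := by
      simp [hbdef, hqsucc k, Matrix.mulVec, dotProduct]
    rw [h1, Finset.sum_comm]
    have h2 : ∀ j, ∑ i, N i j * q k j = s * q k j - a j * q k j := by
      intro j; rw [← Finset.sum_mul, hcol j]; ring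
    rw [Finset.sum_congr rfl fun j _ => h2 j, Finset.sum_sub_distrib, ← Finset.mul_sum]
  have hble : ∀ k, b k ≤ s ^ k := by
    intro k
    induction k with
    | zero => simp [hb0]
    | succ k ih =>
      have h1 := hbsucc k
      have h2 : b (k+1) ≤ s * b k := by rw [h1]; linarith [hgnn k]
      calc b (k+1) ≤ s * b k := h2
        _ ≤ s * s^k := mul_le_mul_of_nonneg_left ih hs.le
        _ = s^(k+1) := (pow_succ' s k).symm
  have hgle : ∀ k, g k ≤ s ^ (k+1) := by
    intro k
    have h1 := hbsucc k
    have : g k = s * b k - b (k+1) := by linarith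
    rw [this, pow_succ']
    nlinarith [hbnn (k+1), hble k, hbnn k]
  -- the telescoping real series
  set f1 : ℕ → ℝ := fun k => g k / s ^ (k+1) with hf1def
  have hf1nn : ∀ k, 0 ≤ f1 k := fun k => div_nonneg (hgnn k) (pow_nonneg hs.le _)
  have hf1eq : ∀ k, f1 k = b k / s^k - b (k+1) / s^(k+1) := by
    intro k
    have hg : g k = s * b k - b (k+1) := by linarith [hbsucc k]
    have hsk : (s:ℝ)^k ≠ 0 := pow_ne_zero _ hs.ne'
    have hsk1 : (s:ℝ)^(k+1) ≠ 0 := pow_ne_zero _ hs.ne'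
    simp only [hf1def]
    rw [hg, pow_succ]
    field_simp
  have hpartial : ∀ n, ∑ k ∈ Finset.range n, f1 k ≤ 1 := by
    intro n
    rw [Finset.sum_congr rfl fun k _ => hf1eq k,
      Finset.sum_range_sub' (fun k => b k / s^k) n]
    have : 0 ≤ b n / s^n := div_nonneg (hbnn n) (pow_nonneg hs.le _)
    rw [hb0]
    simp only [pow_zero, div_one]
    linarith
  have hf1sum : Summable f1 := summable_of_sum_range_le hf1nn hpartial
  have hf1tsum : ∑' k, f1 k ≤ 1 := Summable.tsum_le_of_sum_range_le hf1sum hpartial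
  -- norm bounds for the complex series
  have hnormterm : ∀ (k : ℕ) (y : ℝ), 0 ≤ y → ‖(y:ℂ) * z⁻¹ ^ (k+1)‖ = y * (1/r)^(k+1) := by
    intro k y hy
    rw [norm_mul, norm_pow, norm_inv, Complex.norm_real, Real.norm_eq_abs, abs_of_nonneg hy,
      ← hrdef, one_div]
  have hub : ∀ k : ℕ, (1/r : ℝ)^(k+1) = (1/s)^(k+1) * u^(k+1) := by
    intro k
    rw [← mul_pow]
    congr 1
    field_simp [hudef]
    rw [hudef, mul_div_assoc', mul_div_cancel_left₀ s hr0.ne']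
  have hgeo : Summable (fun k : ℕ => u ^ (k+1)) := by
    have := (summable_geometric_of_lt_one hu0 hu1).mul_left u
    simpa [pow_succ'] using this
  have hsummand : ∀ (C : ℝ) (w : ℕ → ℝ), (∀ k, 0 ≤ w k) → (∀ k, w k ≤ C * s ^ k) →
      Summable (fun k => ((w k:ℝ):ℂ) * z⁻¹ ^ (k+1)) := by
    intro C w hw hwle
    apply Summable.of_norm
    apply Summable.of_nonneg_of_le (fun k => norm_nonneg _) _
      ((summable_geometric_of_lt_one hu0 hu1).mul_left (C * (1/r)))
    intro k
    rw [hnormterm k _ (hw k)]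
    calc w k * (1/r)^(k+1) ≤ (C * s^k) * (1/r)^(k+1) :=
          mul_le_mul_of_nonneg_right (hwle k) (by positivity)
      _ = C * (1/r) * u^k := by
          rw [hudef, div_pow, pow_succ]
          ring
  have hqle' : ∀ k i, q k i ≤ 1 * s ^ k := fun k i => by
    rw [one_mul]; exact le_trans (hqleb k i) (hble k)
  have hxsummable : ∀ i, Summable (fun k => ((q k i:ℝ):ℂ) * z⁻¹ ^ (k+1)) := fun i =>
    hsummand 1 (fun k => q k i) (fun k => hqnn k i) (fun k => hqle' k i)
  set x : Fin K → ℂ := fun i => ∑' k, ((q k i:ℝ):ℂ) * z⁻¹ ^ (k+1) with hxdef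
  have hxeq : ∀ i, z * x i - (∑ j, ((N i j : ℝ):ℂ) * x j) = ((p i:ℝ):ℂ) := by
    intro i
    have hS0 : Summable (fun k => ((q k i:ℝ):ℂ) * z⁻¹ ^ k) := by
      have h := (hxsummable i).mul_left z
      have heq : (fun k => z * (((q k i:ℝ):ℂ) * z⁻¹ ^ (k+1))) = fun k => ((q k i:ℝ):ℂ) * z⁻¹ ^ k := by
        funext k
        rw [pow_succ]
        field_simp
      rwa [heq] at h
    have h1 : z * x i = ∑' k, ((q k i:ℝ):ℂ) * z⁻¹ ^ k := by
      rw [hxdef]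
      dsimp only
      rw [← tsum_mul_left]
      congr 1
      funext k
      rw [pow_succ]
      field_simp
    have h2 : z * x i = ((q 0 i:ℝ):ℂ) + ∑' k, ((q (k+1) i:ℝ):ℂ) * z⁻¹ ^ (k+1) := by
      rw [h1, hS0.tsum_eq_zero_add]
      simp
    have h3 : (∑ j, ((N i j:ℝ):ℂ) * x j) = ∑' k, ((q (k+1) i:ℝ):ℂ) * z⁻¹ ^ (k+1) := by
      calc (∑ j, ((N i j:ℝ):ℂ) * x j)
          = ∑ j, ∑' k, ((N i j:ℝ):ℂ) * (((q k j:ℝ):ℂ) * z⁻¹ ^ (k+1)) := by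
            refine Finset.sum_congr rfl fun j _ => ?_
            rw [hxdef]; dsimp only; rw [← tsum_mul_left]
        _ = ∑' k, ∑ j, ((N i j:ℝ):ℂ) * (((q k j:ℝ):ℂ) * z⁻¹ ^ (k+1)) :=
            (Summable.tsum_finsetSum fun j _ => (hxsummable j).mul_left _).symm
        _ = ∑' k, ((q (k+1) i:ℝ):ℂ) * z⁻¹ ^ (k+1) := by
            congr 1
            funext k
            have hh : ∑ j, ((N i j:ℝ):ℂ) * (((q k j:ℝ):ℂ) * z⁻¹ ^ (k+1))
                = (∑ j, ((N i j:ℝ):ℂ) * ((q k j:ℝ):ℂ)) * z⁻¹ ^ (k+1) := by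
              rw [Finset.sum_mul]
              exact Finset.sum_congr rfl fun j _ => by ring
            rw [hh]
            congr 1
            rw [hqsucc k]
            simp only [Matrix.mulVec, dotProduct]
            push_cast
            rfl
    rw [h2, h3, hq0]
    ring
  set EX : ℂ := ∑ i, x i with hEXdef
  set AX : ℂ := ∑ j, ((a j:ℝ):ℂ) * x j with hAXdef
  have hkey : (c:ℂ) * Complex.I * EX + AX = 1 := by
    have h1 : ∑ i, (z * x i - ∑ j, ((N i j:ℝ):ℂ) * x j) = ∑ i, ((p i:ℝ):ℂ) :=
      Finset.sum_congr rfl fun i _ => hxeq i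
    rw [Finset.sum_sub_distrib, ← Finset.mul_sum, Finset.sum_comm] at h1
    have h2 : ∀ j, ∑ i, ((N i j:ℝ):ℂ) * x j = ((s:ℂ) - ((a j:ℝ):ℂ)) * x j := by
      intro j
      rw [← Finset.sum_mul]
      congr 1
      norm_cast
      exact_mod_cast hcol j
    rw [Finset.sum_congr rfl fun j _ => h2 j] at h1
    have h3 : ∑ i, ((p i:ℝ):ℂ) = 1 := by exact_mod_cast hp1
    have h4 : ∑ j, ((s:ℂ) - ((a j:ℝ):ℂ)) * x j = (s:ℂ) * (∑ i, x i) - ∑ j, ((a j:ℝ):ℂ) * x j := by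
      simp only [sub_mul, Finset.sum_sub_distrib, ← Finset.mul_sum]
    rw [h4, h3, ← hEXdef, ← hAXdef] at h1
    rw [hzdef] at h1
    linear_combination h1
  have hgle' : ∀ k, g k ≤ s * s ^ k := fun k => by
    have h := hgle k; rwa [pow_succ'] at h
  have hgsummable : Summable (fun k => ((g k:ℝ):ℂ) * z⁻¹ ^ (k+1)) :=
    hsummand s g hgnn hgle'
  have hAXswap : AX = ∑' k, ((g k:ℝ):ℂ) * z⁻¹ ^ (k+1) := by
    rw [hAXdef]
    calc ∑ j, ((a j:ℝ):ℂ) * x j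
        = ∑ j, ∑' k, ((a j:ℝ):ℂ) * (((q k j:ℝ):ℂ) * z⁻¹ ^ (k+1)) := by
          refine Finset.sum_congr rfl fun j _ => ?_
          rw [hxdef]; dsimp only; rw [← tsum_mul_left]
      _ = ∑' k, ∑ j, ((a j:ℝ):ℂ) * (((q k j:ℝ):ℂ) * z⁻¹ ^ (k+1)) :=
          (Summable.tsum_finsetSum fun j _ => (hxsummable j).mul_left _).symm
      _ = ∑' k, ((g k:ℝ):ℂ) * z⁻¹ ^ (k+1) := by
          congr 1
          funext k
          have hh : ∑ j, ((a j:ℝ):ℂ) * (((q k j:ℝ):ℂ) * z⁻¹ ^ (k+1))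
              = (∑ j, ((a j:ℝ):ℂ) * ((q k j:ℝ):ℂ)) * z⁻¹ ^ (k+1) := by
            rw [Finset.sum_mul]
            exact Finset.sum_congr rfl fun j _ => by ring
          rw [hh]
          congr 1
          rw [hgdef]
          push_cast
          rfl
  have hAXre : AX.re < 1 := by
    have hres : AX.re = ∑' k, (((g k:ℝ):ℂ) * z⁻¹ ^ (k+1)).re := by
      rw [hAXswap, Complex.re_tsum hgsummable]
    have hterm : ∀ k, (((g k:ℝ):ℂ) * z⁻¹ ^ (k+1)).re ≤ f1 k * u := by
      intro k
      rw [Complex.re_ofReal_mul]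
      have h1 : (z⁻¹ ^ (k+1)).re ≤ (1/r)^(k+1) := by
        calc (z⁻¹ ^ (k+1)).re ≤ ‖z⁻¹ ^ (k+1)‖ := Complex.re_le_norm _
          _ = (1/r)^(k+1) := by
            rw [norm_pow, norm_inv, ← hrdef, one_div]
      have h2 : g k * (z⁻¹ ^ (k+1)).re ≤ g k * (1/r)^(k+1) :=
        mul_le_mul_of_nonneg_left h1 (hgnn k)
      have hsk : (s:ℝ)^(k+1) ≠ 0 := pow_ne_zero _ hs.ne'
      have h3 : g k * (1/r)^(k+1) = f1 k * u^(k+1) := by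
        simp only [hf1def]
        rw [hub k]
        field_simp
        rw [one_div, inv_pow]
        field_simp
      have h4 : f1 k * u^(k+1) ≤ f1 k * u := by
        apply mul_le_mul_of_nonneg_left _ (hf1nn k)
        calc u^(k+1) ≤ u^1 := pow_le_pow_of_le_one hu0 hu1.le (by omega)
          _ = u := pow_one u
      linarith
    have hsum_re : Summable (fun k => (((g k:ℝ):ℂ) * z⁻¹ ^ (k+1)).re) :=
      (Complex.hasSum_re hgsummable.hasSum).summable
    have hfu : Summable (fun k => f1 k * u) := hf1sum.mul_right u
    have h5 : AX.re ≤ ∑' k, f1 k * u := by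
      rw [hres]; exact Summable.tsum_le_tsum hterm hsum_re hfu
    have h6 : (∑' k, f1 k * u : ℝ) = (∑' k, f1 k) * u := tsum_mul_right
    have h7 : (∑' k, f1 k) * u ≤ 1 * u := mul_le_mul_of_nonneg_right hf1tsum hu0
    calc AX.re ≤ (∑' k, f1 k) * u := by rw [← h6]; exact h5
      _ ≤ 1 * u := h7
      _ = u := one_mul u
      _ < 1 := hu1

  -- shared complex facts
  set γ : ℂ := (c:ℂ) * Complex.I with hγdef
  have hγsq : γ * γ = -((c:ℂ)^2) := by
    rw [hγdef]
    have : Complex.I * Complex.I = -1 := Complex.I_mul_I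
    ring_nf
    rw [Complex.I_sq]
    ring
  have htc : ((t:ℝ):ℂ) = -((c:ℂ)^2) := by
    exact_mod_cast congrArg Complex.ofReal (by linarith [hc2] : t = -(c^2))
  have hnorm1 : s ≤ ‖(s:ℂ) + γ‖ := by rw [hγdef, ← hzdef, ← hrdef]; exact hsr.le
  have hnorm2 : s ≤ ‖(s:ℂ) - γ‖ := by
    rw [hγdef]; exact norm_sub_mul_I_ge hs
  have hexp1 : ((s:ℂ) + γ) • (1:Matrix (Fin K) (Fin K) ℂ) - NC = RC + γ • 1 := by
    rw [hRC, add_smul]; abel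
  have hexp2 : ((s:ℂ) - γ) • (1:Matrix (Fin K) (Fin K) ℂ) - NC = RC - γ • 1 := by
    rw [hRC, sub_smul]; abel
  -- eigenvector decomposition
  set α : ℝ := ∑ i, v i with hαdef
  set w : Fin K → ℝ := fun i => v i - α * p i with hwdef
  have hprojv : (1 - Matrix.vecMulVec p (fun _ => (1:ℝ))) *ᵥ v = w := by
    funext i
    rw [Matrix.sub_mulVec, Matrix.one_mulVec]
    simp only [hwdef, Pi.sub_apply]
    congr 1
    simp only [Matrix.mulVec, dotProduct, Matrix.vecMulVec_apply, mul_one]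
    rw [← Finset.mul_sum, ← hαdef, mul_comm]
  have hwsum : ∑ i, w i = 0 := by
    simp only [hwdef]
    rw [Finset.sum_sub_distrib, ← Finset.mul_sum, hp1, mul_one, ← hαdef, sub_self]
  have hR2w : (R^2) *ᵥ w = t • v := by
    rw [← hprojv, Matrix.mulVec_mulVec]
    exact hMv
  by_cases hα0 : α = 0
  · -- degenerate case : w = v , R² v = t v
    have hwv : (R^2) *ᵥ v = t • v := by
      have hwv' : w = v := by funext i; simp [hwdef, hα0]
      have h := hR2w
      rwa [hwv'] at h
    set vC : Fin K → ℂ := fun i => ((v i:ℝ):ℂ) with hvCdef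
    have hvC2 : RC *ᵥ (RC *ᵥ vC) = ((t:ℝ):ℂ) • vC := by
      rw [hvCdef, hRCdef, mapVec_ofReal R v, mapVec_ofReal R (R *ᵥ v)]
      rw [Matrix.mulVec_mulVec, ← pow_two, hwv]
      funext i
      simp only [Pi.smul_apply, smul_eq_mul]
      push_cast
      ring
    have hstep1 : (((s:ℂ) + γ) • (1:Matrix (Fin K) (Fin K) ℂ) - NC) *ᵥ (RC *ᵥ vC - γ • vC) = 0 := by
      rw [hexp1]
      have hcomp : (RC + γ • 1) *ᵥ (RC *ᵥ vC - γ • vC)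
          = RC *ᵥ (RC *ᵥ vC) - (γ*γ) • vC := by
        simp only [Matrix.add_mulVec, Matrix.mulVec_sub, Matrix.smul_mulVec,
          Matrix.one_mulVec, Matrix.mulVec_smul, smul_smul]
        module
      rw [hcomp, hvC2, htc, hγsq]
      simp
    have h1 := inj ((s:ℂ) + γ) hnorm1 _ hstep1
    have hstep2 : (((s:ℂ) - γ) • (1:Matrix (Fin K) (Fin K) ℂ) - NC) *ᵥ vC = 0 := by
      rw [hexp2, Matrix.sub_mulVec, Matrix.smul_mulVec, Matrix.one_mulVec]
      exact h1
    have h2 := inj ((s:ℂ) - γ) hnorm2 _ hstep2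
    apply hv0
    funext i
    have h3 := congrFun h2 i
    simpa [hvCdef] using h3
  · -- main case
    set w' : Fin K → ℝ := fun i => α⁻¹ * w i with hw'def
    have hw'eq : (R^2) *ᵥ w' = t • w' + t • p := by
      have h1 : (R^2) *ᵥ w' = α⁻¹ • ((R^2) *ᵥ w) := by
        have hww : w' = α⁻¹ • w := by funext i; simp [hw'def]
        rw [hww, Matrix.mulVec_smul]
      rw [h1, hR2w]
      funext i
      have hvi : v i = w i + α * p i := by simp only [hwdef]; ring
      simp only [Pi.smul_apply, Pi.add_apply, smul_eq_mul, hw'def, hvi]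
      field_simp
    have hw'sum : ∑ i, w' i = 0 := by
      simp only [hw'def]
      rw [← Finset.mul_sum, hwsum, mul_zero]
    set W : Fin K → ℂ := fun i => ((w' i:ℝ):ℂ) with hWdef
    set pC : Fin K → ℂ := fun i => ((p i:ℝ):ℂ) with hpCdef
    have hWC : RC *ᵥ (RC *ᵥ W) = ((t:ℝ):ℂ) • W + ((t:ℝ):ℂ) • pC := by
      rw [hWdef, hRCdef, mapVec_ofReal R w', mapVec_ofReal R (R *ᵥ w')]
      rw [Matrix.mulVec_mulVec, ← pow_two, hw'eq]
      funext i
      simp only [hpCdef, Pi.add_apply, Pi.smul_apply, smul_eq_mul]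
      push_cast
      ring
    have hxp : (((s:ℂ) + γ) • (1:Matrix (Fin K) (Fin K) ℂ) - NC) *ᵥ x = pC := by
      funext i
      rw [Matrix.sub_mulVec, Matrix.smul_mulVec, Matrix.one_mulVec]
      simp only [Pi.sub_apply, Pi.smul_apply, smul_eq_mul, Matrix.mulVec, dotProduct,
        hNCdef, Matrix.map_apply, hpCdef]
      have h0 := hxeq i
      rw [hzdef] at h0
      rw [hγdef]
      linear_combination h0
    have hfac : (((s:ℂ) + γ) • (1:Matrix (Fin K) (Fin K) ℂ) - NC) *ᵥ
        (RC *ᵥ W - γ • W - ((t:ℝ):ℂ) • x) = 0 := by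
      have hsplit : (((s:ℂ)+γ) • (1:Matrix (Fin K) (Fin K) ℂ) - NC) *ᵥ (RC *ᵥ W - γ • W - ((t:ℝ):ℂ) • x)
          = (((s:ℂ)+γ) • (1:Matrix (Fin K) (Fin K) ℂ) - NC) *ᵥ (RC *ᵥ W - γ • W)
            - ((t:ℝ):ℂ) • ((((s:ℂ)+γ) • (1:Matrix (Fin K) (Fin K) ℂ) - NC) *ᵥ x) := by
        rw [Matrix.mulVec_sub, Matrix.mulVec_smul]
      rw [hsplit, hxp]
      have h2 : (((s:ℂ)+γ) • (1:Matrix (Fin K) (Fin K) ℂ) - NC) *ᵥ (RC *ᵥ W - γ • W)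
          = ((t:ℝ):ℂ) • pC := by
        rw [hexp1]
        have hcomp : (RC + γ • 1) *ᵥ (RC *ᵥ W - γ • W)
            = RC *ᵥ (RC *ᵥ W) - (γ*γ) • W := by
          simp only [Matrix.add_mulVec, Matrix.mulVec_sub, Matrix.smul_mulVec,
            Matrix.one_mulVec, Matrix.mulVec_smul, smul_smul]
          module
        rw [hcomp, hWC, hγsq, htc]
        module
      rw [h2, sub_self]
    have hEq := inj ((s:ℂ) + γ) hnorm1 _ hfac
    have hEq' : RC *ᵥ W - γ • W = ((t:ℝ):ℂ) • x := sub_eq_zero.mp hEq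
    have hsumRCW : ∑ i, (RC *ᵥ W) i = ((∑ j, a j * w' j : ℝ):ℂ) := by
      simp only [Matrix.mulVec, dotProduct, hRCdef, Matrix.map_apply, hWdef]
      rw [Finset.sum_comm]
      push_cast
      refine Finset.sum_congr rfl fun j _ => ?_
      rw [← Finset.sum_mul]
      norm_cast
    have h1 := congrArg (fun f : Fin K → ℂ => ∑ i, f i) hEq'
    simp only [Pi.sub_apply, Pi.smul_apply, smul_eq_mul, Finset.sum_sub_distrib,
      ← Finset.mul_sum] at h1
    have hWsum0 : ∑ i, W i = 0 := by
      simp only [hWdef]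
      exact_mod_cast hw'sum
    rw [hWsum0, mul_zero, sub_zero, hsumRCW, ← hEXdef] at h1
    have h2 := congrArg Complex.im h1
    simp only [Complex.ofReal_im, Complex.im_ofReal_mul] at h2
    have hEXim : EX.im = 0 := (mul_eq_zero.mp h2.symm).resolve_left ht.ne
    have h5 := congrArg Complex.re hkey
    simp only [Complex.add_re, Complex.one_re] at h5
    have h6 : ((c:ℂ) * Complex.I * EX).re = 0 := by
      have hrw : ((c:ℂ) * Complex.I * EX) = (c:ℂ) * (Complex.I * EX) := by ring
      rw [hrw, Complex.re_ofReal_mul]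
      simp [Complex.mul_re, hEXim]
    rw [h6, zero_add] at h5
    linarith [hAXre]
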